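/- The vertex Frenet frame of a discrete curve is orthonormal and positively oriented: for every i ∈ ℤ, the vectors Tᵛᵢ, Nᵛᵢ, Bᵛᵢ are pairwise orthogonal unit vectors in ℝ³ with Nᵛᵢ = Bᵛᵢ × Tᵛᵢ, so that the 3×3 matrix with columns Tᵛᵢ, Nᵛᵢ, Bᵛᵢ has determinant 1. -/

import Mathlib

open RealInnerProductSpace

noncomputable section

/-- Points of a discrete curve live in `ℝ³` with the Euclidean norm. -/
abbrev E3 := EuclideanSpace ℝ (Fin 3)

/-- The cross product on `ℝ³`. -/
def cross3 (u v : E3) : E3 :=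
  WithLp.toLp 2 ![u 1 * v 2 - u 2 * v 1, u 2 * v 0 - u 0 * v 2, u 0 * v 1 - u 1 * v 0]

lemma inner3 (u v : E3) : ⟪u, v⟫ = u 0 * v 0 + u 1 * v 1 + u 2 * v 2 := by
  simp [PiLp.inner_apply, Fin.sum_univ_three]; ring

lemma cross3_0 (u v : E3) : cross3 u v 0 = u 1 * v 2 - u 2 * v 1 := rfl
lemma cross3_1 (u v : E3) : cross3 u v 1 = u 2 * v 0 - u 0 * v 2 := rfl
lemma cross3_2 (u v : E3) : cross3 u v 2 = u 0 * v 1 - u 1 * v 0 := rfl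

lemma cross3_add_left (u v w : E3) : cross3 (u + v) w = cross3 u w + cross3 v w := by
  ext i; fin_cases i <;>
    simp [cross3_0, cross3_1, cross3_2, PiLp.add_apply] <;> ring

lemma cross3_add_right (u v w : E3) : cross3 u (v + w) = cross3 u v + cross3 u w := by
  ext i; fin_cases i <;>
    simp [cross3_0, cross3_1, cross3_2, PiLp.add_apply] <;> ring

lemma cross3_smul_left (a : ℝ) (u v : E3) : cross3 (a • u) v = a • cross3 u v := by
  ext i; fin_cases i <;>
    simp [cross3_0, cross3_1, cross3_2, PiLp.smul_apply, smul_eq_mul] <;> ring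

lemma cross3_smul_right (a : ℝ) (u v : E3) : cross3 u (a • v) = a • cross3 u v := by
  ext i; fin_cases i <;>
    simp [cross3_0, cross3_1, cross3_2, PiLp.smul_apply, smul_eq_mul] <;> ring

lemma inner_cross3_left (u v : E3) : ⟪u, cross3 u v⟫ = 0 := by
  simp [inner3, Fin.sum_univ_three, cross3_0, cross3_1, cross3_2]; ring

lemma inner_cross3_right (u v : E3) : ⟪v, cross3 u v⟫ = 0 := by
  simp [inner3, Fin.sum_univ_three, cross3_0, cross3_1, cross3_2]; ring

lemma lagrange (u v : E3) :
    ⟪cross3 u v, cross3 u v⟫ = ⟪u, u⟫ * ⟪v, v⟫ - ⟪u, v⟫ ^ 2 := by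
  simp only [inner3]; simp [Fin.sum_univ_three, cross3_0, cross3_1, cross3_2]; ring

lemma norm_from_inner (x : E3) {a : ℝ} (ha : 0 ≤ a) (h : ⟪x, x⟫ = a ^ 2) : ‖x‖ = a := by
  have h2 : ‖x‖ * ‖x‖ = a * a := by
    rw [← real_inner_self_eq_norm_mul_norm, h]; ring
  nlinarith [norm_nonneg x]

lemma norm_cross3 (u v : E3) (hu : ‖u‖ = 1) (huv : ⟪u, v⟫ = 0) :
    ‖cross3 u v‖ = ‖v‖ := by
  apply norm_from_inner _ (norm_nonneg v)
  rw [lagrange, huv, real_inner_self_eq_norm_mul_norm, real_inner_self_eq_norm_mul_norm, hu]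
  ring

lemma norm_cross3' (u v : E3) (hv : ‖v‖ = 1) (huv : ⟪u, v⟫ = 0) :
    ‖cross3 u v‖ = ‖u‖ := by
  apply norm_from_inner _ (norm_nonneg u)
  rw [lagrange, huv, real_inner_self_eq_norm_mul_norm, real_inner_self_eq_norm_mul_norm, hv]
  ring

lemma normalize_double (b : E3) (hb : ‖b‖ = 1) : ‖b + b‖⁻¹ • (b + b) = b := by
  have h2 : b + b = (2 : ℝ) • b := (two_smul ℝ b).symm
  rw [h2, norm_smul, hb, smul_smul]
  norm_num

lemma det_formula (t b : E3) :
    (Matrix.of fun r c : Fin 3 => (![t, cross3 b t, b] c) r).det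
      = ⟪t, t⟫ * ⟪b, b⟫ - ⟪t, b⟫ ^ 2 := by
  rw [Matrix.det_fin_three]
  simp only [inner3]; simp [Fin.sum_univ_three, cross3_0, cross3_1, cross3_2]
  ring

/-- The vertex Frenet frame of a discrete curve is orthonormal and positively oriented. -/
theorem vertex_frame_orthonormal_positively_oriented
    (γ T N B : ℤ → E3)
    (hlen : ∀ i : ℤ, ‖γ (i + 1) - γ i‖ = 1)
    (hmid : ∀ i : ℤ, Even i → γ i = (2 : ℝ)⁻¹ • (γ (i + 1) + γ (i - 1)))
    (hT : ∀ i : ℤ, T i = γ (i + 1) - γ i)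
    (hcross : ∀ i : ℤ, Even i → cross3 (T i) (T (i + 1)) ≠ 0)
    (hBeven : ∀ i : ℤ, Even i →
      B i = ‖cross3 (T i) (T (i + 1))‖⁻¹ • cross3 (T i) (T (i + 1)))
    (hBodd : ∀ i : ℤ, Odd i → B i = B (i - 1))
    (hN : ∀ i : ℤ, N i = cross3 (B i) (T i))
    (Tv Nv Bv : ℤ → E3)
    (hMT : ∀ i : ℤ, T (i + 1) + T i ≠ 0)
    (hMN : ∀ i : ℤ, N (i + 1) + N i ≠ 0)
    (hMB : ∀ i : ℤ, B (i + 1) + B i ≠ 0)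
    (hTv : ∀ i : ℤ, Tv i = ‖T (i + 1) + T i‖⁻¹ • (T (i + 1) + T i))
    (hNv : ∀ i : ℤ, Nv i = ‖N (i + 1) + N i‖⁻¹ • (N (i + 1) + N i))
    (hBv : ∀ i : ℤ, Bv i = ‖B (i + 1) + B i‖⁻¹ • (B (i + 1) + B i))
    : ∀ i : ℤ,
      ‖Tv i‖ = 1 ∧ ‖Nv i‖ = 1 ∧ ‖Bv i‖ = 1 ∧
      ⟪Tv i, Nv i⟫ = 0 ∧ ⟪Tv i, Bv i⟫ = 0 ∧ ⟪Nv i, Bv i⟫ = 0 ∧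
      Nv i = cross3 (Bv i) (Tv i) ∧
      (Matrix.of fun r c : Fin 3 => (![Tv i, Nv i, Bv i] c) r).det = 1 := by
  intro i
  have hTnorm : ∀ j : ℤ, ‖T j‖ = 1 := fun j => by rw [hT]; exact hlen j
  have hBfact : ∀ j : ℤ, Even j →
      ‖B j‖ = 1 ∧ ⟪T j, B j⟫ = 0 ∧ ⟪T (j + 1), B j⟫ = 0 := by
    intro j hj
    have hc := hcross j hj
    have hBj := hBeven j hj
    refine ⟨?_, ?_, ?_⟩
    · rw [hBj]; exact norm_smul_inv_norm hc
    · rw [hBj, real_inner_smul_right, inner_cross3_left, mul_zero]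
    · rw [hBj, real_inner_smul_right, inner_cross3_right, mul_zero]
  have key : ‖Tv i‖ = 1 ∧ ‖Bv i‖ = 1 ∧ ⟪Tv i, Bv i⟫ = 0 ∧
      Nv i = cross3 (Bv i) (Tv i) := by
    rcases Int.even_or_odd i with he | ho
    · -- i even
      obtain ⟨hBn, hTB, hT1B⟩ := hBfact i he
      have hB1 : B (i + 1) = B i := by
        have h := hBodd (i + 1) (Even.add_one he)
        simpa using h
      have hs : T (i + 1) + T i ≠ 0 := hMT i
      have hBvi : Bv i = B i := by rw [hBv i, hB1, normalize_double _ hBn]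
      have hsB : ⟪T (i + 1) + T i, B i⟫ = 0 := by
        rw [inner_add_left, hTB, hT1B, add_zero]
      refine ⟨?_, ?_, ?_, ?_⟩
      · rw [hTv i]; exact norm_smul_inv_norm hs
      · rw [hBvi]; exact hBn
      · rw [hTv i, hBvi, real_inner_smul_left, hsB, mul_zero]
      · have hNsum : N (i + 1) + N i = cross3 (B i) (T (i + 1) + T i) := by
          rw [hN (i + 1), hN i, hB1, cross3_add_right]
        have hncross : ‖cross3 (B i) (T (i + 1) + T i)‖ = ‖T (i + 1) + T i‖ := by
          apply norm_cross3 _ _ hBn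
          rw [real_inner_comm]; exact hsB
        rw [hNv i, hNsum, hncross, hBvi, hTv i, cross3_smul_right]
    · -- i odd
      have hip1 : Even (i + 1) := by rcases ho with ⟨k, hk⟩; exact ⟨k + 1, by omega⟩
      have him1 : Even (i - 1) := by rcases ho with ⟨k, hk⟩; exact ⟨k, by omega⟩
      have hTeq : T (i + 1) = T i := by
        have h := hmid (i + 1) hip1
        have h2 : γ (i + 1 + 1) + γ (i + 1 - 1) = (2 : ℝ) • γ (i + 1) := by
          rw [h, smul_smul]; norm_num
        have e1 : i + 1 + 1 = i + 2 := by ring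
        have e2 : i + 1 - 1 = i := by ring
        rw [e1, e2, two_smul] at h2
        rw [hT (i + 1), hT i, e1, sub_eq_sub_iff_add_eq_add]
        exact h2
      have hBi : B i = B (i - 1) := hBodd i ho
      obtain ⟨hBn1, _, hTB1'⟩ := hBfact (i - 1) him1
      have hBn_i : ‖B i‖ = 1 := by rw [hBi]; exact hBn1
      have hTB1 : ⟪T i, B i⟫ = 0 := by rw [hBi]; simpa using hTB1'
      obtain ⟨hBn2, hTB2, _⟩ := hBfact (i + 1) hip1
      have hTB2' : ⟪T i, B (i + 1)⟫ = 0 := by rw [← hTeq]; exact hTB2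
      have hTveq : Tv i = T i := by
        rw [hTv i, hTeq, normalize_double _ (hTnorm i)]
      have hs : B (i + 1) + B i ≠ 0 := hMB i
      have hsT : ⟪B (i + 1) + B i, T i⟫ = 0 := by
        rw [inner_add_left, real_inner_comm (T i) (B (i + 1)), real_inner_comm (T i) (B i),
          hTB1, hTB2', add_zero]
      refine ⟨?_, ?_, ?_, ?_⟩
      · rw [hTveq]; exact hTnorm i
      · rw [hBv i]; exact norm_smul_inv_norm hs
      · rw [hTveq, hBv i, real_inner_smul_right, inner_add_right, hTB1, hTB2',
          add_zero, mul_zero]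
      · have hNsum : N (i + 1) + N i = cross3 (B (i + 1) + B i) (T i) := by
          rw [hN (i + 1), hN i, hTeq, cross3_add_left]
        have hncross : ‖cross3 (B (i + 1) + B i) (T i)‖ = ‖B (i + 1) + B i‖ :=
          norm_cross3' _ _ (hTnorm i) hsT
        rw [hNv i, hNsum, hncross, hBv i, hTveq, cross3_smul_left]
  obtain ⟨h1, h3, h5, h7⟩ := key
  have h5' : ⟪Bv i, Tv i⟫ = 0 := by rw [real_inner_comm]; exact h5
  have h2 : ‖Nv i‖ = 1 := by rw [h7, norm_cross3 _ _ h3 h5']; exact h1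
  have h4 : ⟪Tv i, Nv i⟫ = 0 := by rw [h7]; exact inner_cross3_right _ _
  have h6 : ⟪Nv i, Bv i⟫ = 0 := by
    rw [h7, real_inner_comm]; exact inner_cross3_left _ _
  have h8 : (Matrix.of fun r c : Fin 3 => (![Tv i, Nv i, Bv i] c) r).det = 1 := by
    rw [h7, det_formula, real_inner_self_eq_norm_mul_norm,
      real_inner_self_eq_norm_mul_norm, h1, h3, h5]
    norm_num
  exact ⟨h1, h2, h3, h4, h5, h6, h7, h8⟩
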